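/- For any permutation π of the atoms (extended to hereditarily finite sets), any k-form φ, any groups H ⊆ G of permutations of atoms commuting with π's conjugation appropriately, and any k-molecule σ, we have π((φ,G,H) * σ) = (φ,G,H) * (π∘σ), provided π is an automorphism (colour-preserving) and πG = Gπ, πH = Hπ. -/
import Mathlib


open scoped Classical

/-- An abstract model of hereditarily finite sets over a set `A` of atoms,
together with the extension of permutations of atoms to all objects. -/
structure HFModel (A : Type) : Type 1 where
  Obj : Type
  atom : A → Obj
  mkSet : Finset Obj → Obj
  members : Obj → Finset Obj
  act : Equiv.Perm A → Obj → Obj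
  atom_injective : Function.Injective atom
  atom_ne_mkSet : ∀ a s, atom a ≠ mkSet s
  members_mkSet : ∀ s, members (mkSet s) = s
  members_atom : ∀ a, members (atom a) = ∅
  atom_or_set : ∀ x, (∃ a, x = atom a) ∨ (∃ s, x = mkSet s)
  act_atom : ∀ π a, act π (atom a) = atom (π a)
  act_mkSet : ∀ π s, act π (mkSet s) = mkSet (s.image (act π))
  act_one : ∀ x, act 1 x = x
  act_mul : ∀ π ρ x, act (π * ρ) x = act π (act ρ x)

/-- Abstract 2-configurations for `k`-molecules with colours in `κ`. -/
structure Config2 (k : ℕ) (κ : Type) : Type where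
  rel : Fin k → Fin k → Bool
  col₁ : Fin k → κ
  col₂ : Fin k → κ

/-- The configuration of a pair of `k`-molecules. -/
def conf {A κ : Type} [DecidableEq A] {k : ℕ} (col : A → κ) (τ σ : Fin k → A) :
    Config2 k κ :=
  ⟨fun p q => decide (τ p = σ q), col ∘ τ, col ∘ σ⟩

/-- `k`-forms. -/
inductive Form (k : ℕ) (κ : Type) : Type where
  | atom : Fin k → Form k κ
  | set : List (Form k κ × Config2 k κ) → Form k κ

/-- Evaluation `φ * σ` of a `k`-form on a `k`-molecule. -/
noncomputable def evalForm {A κ : Type} [DecidableEq A] [Fintype A] {k : ℕ}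
    (M : HFModel A) (col : A → κ) : (Fin k → A) → Form k κ → M.Obj
  | σ, .atom p => M.atom (σ p)
  | σ, .set l =>
      M.mkSet <| (l.attach.map (fun x =>
        (Finset.univ.filter
            (fun τ : Fin k → A => Function.Injective τ ∧ conf col τ σ = x.1.2)).image
          (fun τ => evalForm M col τ x.1.1))).foldr (· ∪ ·) ∅
  termination_by σ φ => sizeOf φ
  decreasing_by
    obtain ⟨⟨φ', E'⟩, hmem⟩ := x
    have h := List.sizeOf_lt_of_mem hmem
    simp at h ⊢
    omega

/-- The orbit `G x` of an object under a finite set of permutations, as an object. -/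
noncomputable def orbitObj {A : Type} (M : HFModel A) (G : Finset (Equiv.Perm A))
    (x : M.Obj) : M.Obj :=
  M.mkSet (G.image (fun g => M.act g x))

/-- The object `⋃_{h ∈ H} φ * (h ∘ σ)`. -/
noncomputable def unionEval {A κ : Type} [DecidableEq A] [Fintype A] {k : ℕ}
    (M : HFModel A) (col : A → κ) (H : Finset (Equiv.Perm A)) (φ : Form k κ)
    (σ : Fin k → A) : M.Obj :=
  M.mkSet (H.biUnion (fun h => M.members (evalForm M col (⇑h ∘ σ) φ)))

/-- The orbit-form evaluation `(φ,G,H) * σ = G(⋃_{h∈H} φ * hσ)`. -/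
noncomputable def orbitEval {A κ : Type} [DecidableEq A] [Fintype A] {k : ℕ}
    (M : HFModel A) (col : A → κ) (φ : Form k κ) (G H : Finset (Equiv.Perm A))
    (σ : Fin k → A) : M.Obj :=
  orbitObj M G (unionEval M col H φ σ)

/-- A finite set of permutations forming a subgroup. -/
def IsSubgroupF {A : Type} (G : Finset (Equiv.Perm A)) : Prop :=
  (1 : Equiv.Perm A) ∈ G ∧ (∀ g ∈ G, g⁻¹ ∈ G) ∧ ∀ g ∈ G, ∀ h ∈ G, g * h ∈ G

/-- Colour-preserving permutations (automorphisms). -/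
def IsAut {A κ : Type} (col : A → κ) (π : Equiv.Perm A) : Prop :=
  ∀ a, col (π a) = col a

/-- `X` is a support of object `x`. -/
def SupportsObj {A κ : Type} (M : HFModel A) (col : A → κ) (X : Set A) (x : M.Obj) : Prop :=
  ∀ π : Equiv.Perm A, IsAut col π → (∀ a ∈ X, π a = a) → M.act π x = x

/-- Transitive-closure membership. -/
inductive InTC {A : Type} (M : HFModel A) : M.Obj → M.Obj → Prop where
  | mem {x y} : x ∈ M.members y → InTC M x y
  | trans {x z y} : x ∈ M.members z → InTC M z y → InTC M x y

/-- `y` is a transitive set. -/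
def TransitiveObj {A : Type} (M : HFModel A) (y : M.Obj) : Prop :=
  ∀ z ∈ M.members y, ∀ w ∈ M.members z, w ∈ M.members y

/-- `x` is `k`-skew-symmetric. -/
def SkewSym {A κ : Type} (M : HFModel A) (col : A → κ) (k : ℕ) (x : M.Obj) : Prop :=
  ∃ (G : Finset (Equiv.Perm A)) (y : M.Obj), IsSubgroupF G ∧ x = orbitObj M G y ∧
    TransitiveObj M y ∧
    ∀ z, (z = y ∨ InTC M z y) →
      ∃ X : Finset A, X.card ≤ k ∧ SupportsObj M col X (orbitObj M G z)

section Aux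

variable {A κ : Type} [DecidableEq A] [Fintype A] {k : ℕ}

lemma conf_comp (col : A → κ) (π : Equiv.Perm A) (hπ : IsAut col π)
    (τ σ : Fin k → A) : conf col (⇑π ∘ τ) (⇑π ∘ σ) = conf col τ σ := by
  simp only [conf, Config2.mk.injEq]
  refine ⟨?_, ?_, ?_⟩
  · funext p q
    simp [π.injective.eq_iff]
  · funext p; exact hπ _
  · funext p; exact hπ _

lemma filter_comp (col : A → κ) (π : Equiv.Perm A) (hπ : IsAut col π)
    (σ : Fin k → A) (E : Config2 k κ) :
    (Finset.univ.filter
        (fun τ : Fin k → A => Function.Injective τ ∧ conf col τ (⇑π ∘ σ) = E))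
      = (Finset.univ.filter
          (fun τ : Fin k → A => Function.Injective τ ∧ conf col τ σ = E)).image
          (fun τ => ⇑π ∘ τ) := by
  ext τ'
  simp only [Finset.mem_filter, Finset.mem_univ, true_and, Finset.mem_image]
  constructor
  · rintro ⟨hinj, hconf⟩
    refine ⟨⇑π⁻¹ ∘ τ', ⟨?_, ?_⟩, ?_⟩
    · exact (Equiv.injective _).comp hinj
    · have h := conf_comp col π hπ (⇑π⁻¹ ∘ τ') σ
      have : ⇑π ∘ (⇑π⁻¹ ∘ τ') = τ' := by
        funext p; simp
      rw [this] at h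
      rw [← h, hconf]
    · funext p; simp
  · rintro ⟨τ, ⟨hinj, hconf⟩, rfl⟩
    exact ⟨π.injective.comp hinj, by rw [conf_comp col π hπ, hconf]⟩

lemma members_act {M : HFModel A} (π : Equiv.Perm A) (x : M.Obj) :
    M.members (M.act π x) = (M.members x).image (M.act π) := by
  rcases M.atom_or_set x with ⟨a, rfl⟩ | ⟨s, rfl⟩
  · rw [M.act_atom, M.members_atom, M.members_atom, Finset.image_empty]
  · rw [M.act_mkSet, M.members_mkSet, M.members_mkSet]

lemma image_foldr_union {β γ : Type*} [DecidableEq β] [DecidableEq γ]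
    (f : β → γ) (L : List (Finset β)) :
    (L.foldr (· ∪ ·) ∅).image f = (L.map (·.image f)).foldr (· ∪ ·) ∅ := by
  induction L with
  | nil => simp
  | cons a L ih => simp [Finset.image_union, ih]

lemma conj_image {G : Finset (Equiv.Perm A)} (π : Equiv.Perm A)
    (hGcomm : ∀ g ∈ G, π * g * π⁻¹ ∈ G) :
    G.image (fun g => π * g * π⁻¹) = G := by
  apply Finset.eq_of_subset_of_card_le
  · intro x hx
    simp only [Finset.mem_image] at hx
    obtain ⟨g, hg, rfl⟩ := hx
    exact hGcomm g hg
  · rw [Finset.card_image_of_injective]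
    intro a b hab
    simp only at hab
    exact mul_left_cancel (mul_right_cancel hab)

lemma eval_act {M : HFModel A} (col : A → κ) (π : Equiv.Perm A)
    (hπ : IsAut col π) :
    ∀ (n : ℕ) (φ : Form k κ), sizeOf φ ≤ n → ∀ σ : Fin k → A,
      M.act π (evalForm M col σ φ) = evalForm M col (⇑π ∘ σ) φ := by
  intro n
  induction n with
  | zero =>
    intro φ h
    cases φ <;> simp at h
  | succ n ih =>
    intro φ hn σ
    cases φ with
    | atom p =>
      simp [evalForm, M.act_atom]
    | set l =>
      rw [evalForm, evalForm, M.act_mkSet]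
      congr 1
      rw [image_foldr_union, List.map_map]
      congr 1
      apply List.map_congr_left
      rintro ⟨⟨φ', E⟩, hmem⟩ _
      simp only [Function.comp_apply]
      rw [Finset.image_image, filter_comp col π hπ, Finset.image_image]
      apply Finset.image_congr
      rintro τ hτ
      simp only [Function.comp_apply]
      have hsize : sizeOf φ' ≤ n := by
        have h := List.sizeOf_lt_of_mem hmem
        simp only [Form.set.sizeOf_spec] at hn
        simp at h
        omega
      exact ih φ' hsize τ

end Aux

/-- Equivariance of orbit-form evaluation under automorphisms:
`π((φ,G,H) * σ) = (φ,G,H) * (π ∘ σ)`. -/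
theorem equivariance_of_orbit_form_evaluation
    {A κ : Type} [DecidableEq A] [Fintype A] {k : ℕ}
    (M : HFModel A) (col : A → κ) (π : Equiv.Perm A) (hπ : IsAut col π)
    (G H : Finset (Equiv.Perm A)) (hGgrp : IsSubgroupF G) (hHgrp : IsSubgroupF H)
    (hHG : H ⊆ G)
    (hGcomm : ∀ g ∈ G, π * g * π⁻¹ ∈ G) (hHcomm : ∀ h ∈ H, π * h * π⁻¹ ∈ H)
    (φ : Form k κ) (σ : Fin k → A) (hσ : Function.Injective σ) :
    M.act π (orbitEval M col φ G H σ) = orbitEval M col φ G H (⇑π ∘ σ) := by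
  have heval : ∀ τ : Fin k → A,
      M.act π (evalForm M col τ φ) = evalForm M col (⇑π ∘ τ) φ :=
    eval_act col π hπ (sizeOf φ) φ le_rfl
  have hU : M.act π (unionEval M col H φ σ) = unionEval M col H φ (⇑π ∘ σ) := by
    unfold unionEval
    rw [M.act_mkSet, Finset.biUnion_image]
    congr 1
    have hcomp : ∀ h : Equiv.Perm A, ⇑π ∘ (⇑h ∘ σ) = ⇑(π * h * π⁻¹) ∘ (⇑π ∘ σ) := by
      intro h; funext p; simp
    calc (H.biUnion fun h => (M.members (evalForm M col (⇑h ∘ σ) φ)).image (M.act π))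
        = H.biUnion
            (fun h => M.members (evalForm M col (⇑(π * h * π⁻¹) ∘ (⇑π ∘ σ)) φ)) := by
          refine Finset.biUnion_congr rfl fun h _ => ?_
          rw [← members_act, heval, hcomp h]
      _ = (H.image (fun h => π * h * π⁻¹)).biUnion
            (fun h => M.members (evalForm M col (⇑h ∘ (⇑π ∘ σ)) φ)) := by
          rw [Finset.image_biUnion]
      _ = H.biUnion (fun h => M.members (evalForm M col (⇑h ∘ (⇑π ∘ σ)) φ)) := by
          rw [conj_image π hHcomm]
  unfold orbitEval orbitObj
  rw [M.act_mkSet, Finset.image_image]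
  congr 1
  rw [← hU]
  conv_rhs => rw [← conj_image π hGcomm, Finset.image_image]
  apply Finset.image_congr
  intro g _
  simp only [Function.comp_apply]
  rw [← M.act_mul, ← M.act_mul]
  congr 1
  group
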